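/- For a dataset D = (s₁,…,sₙ) drawn i.i.d. from P (i.e., D ∼ Pⁿ), define the clipping bias b_D := max_{x∈𝒳} ‖(1/n) Σ_{i=1}^n ( g(x,sᵢ) − Π_C(g(x,sᵢ)) )‖. Then with probability at least 4/5 over D ∼ Pⁿ, one has b_D ≤ 5·G_k^k / ((k−1)·C^{k−1}). -/

import Mathlib

open MeasureTheory
open scoped ENNReal NNReal

/-- Euclidean clipping to the ball of radius `C`: `Π_C(v) = v·min(C/‖v‖, 1)`,
with `Π_C(0) = 0` (division by zero yields `0` in Lean). -/
noncomputable def euclidClip {d : ℕ} (C : ℝ) (v : EuclideanSpace ℝ (Fin d)) :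
    EuclideanSpace ℝ (Fin d) :=
  (min (C / ‖v‖) 1) • v

lemma aux_pow (C y : ℝ) (hC : 0 < C) (hy : C ≤ y) (m : ℕ) :
    (m : ℝ) * C ^ m * (y - C) ≤ y ^ (m + 1) := by
  induction m with
  | zero => simpa using le_trans hC.le hy
  | succ m ih =>
    have hyC : C ^ (m + 1) ≤ y ^ (m + 1) := pow_le_pow_left₀ hC.le hy _
    have h0 : (0 : ℝ) ≤ y - C := by linarith
    have h1 : C * ((m : ℝ) * C ^ m * (y - C)) ≤ C * y ^ (m + 1) :=
      mul_le_mul_of_nonneg_left ih hC.le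
    have h2 : C ^ (m + 1) * (y - C) ≤ y ^ (m + 1) * (y - C) :=
      mul_le_mul_of_nonneg_right hyC h0
    push_cast
    simp only [pow_succ] at h1 h2 hyC ⊢
    nlinarith [h1, h2]

lemma clip_norm_eq {d : ℕ} (C : ℝ) (hC : 0 < C) (v : EuclideanSpace ℝ (Fin d)) :
    ‖v - euclidClip C v‖ = max (‖v‖ - C) 0 := by
  rcases eq_or_ne v 0 with rfl | hv
  · simp only [euclidClip, smul_zero, sub_zero, norm_zero, zero_sub]
    exact (max_eq_right (by linarith)).symm
  · have hv0 : 0 < ‖v‖ := norm_pos_iff.mpr hv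
    rcases le_or_gt ‖v‖ C with h | h
    · have : C / ‖v‖ ≥ 1 := (one_le_div hv0).mpr h
      have hmin : min (C / ‖v‖) 1 = 1 := min_eq_right this
      simp [euclidClip, hmin, max_eq_right (by linarith : ‖v‖ - C ≤ 0)]
    · have hmin : min (C / ‖v‖) 1 = C / ‖v‖ :=
        min_eq_left (by rw [div_le_one hv0]; exact h.le)
      have : v - euclidClip C v = (1 - C / ‖v‖) • v := by
        rw [euclidClip, hmin, sub_smul, one_smul]
      rw [this, norm_smul, Real.norm_eq_abs, abs_of_nonneg (by
        rw [sub_nonneg, div_le_one hv0]; exact h.le)]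
      rw [max_eq_left (by linarith : (0:ℝ) ≤ ‖v‖ - C)]
      field_simp

lemma le_biSup_real {α : Type*} (f : α → ℝ) {s : Set α} (hb : BddAbove (f '' s))
    (hf : ∀ x ∈ s, 0 ≤ f x) {x : α} (hx : x ∈ s) : f x ≤ ⨆ y ∈ s, f y := by
  classical
  have hF : BddAbove (Set.range fun y => ⨆ _ : y ∈ s, f y) := by
    obtain ⟨M, hM⟩ := hb
    refine ⟨max M 0, ?_⟩
    rintro _ ⟨y, rfl⟩
    dsimp only
    by_cases hy : y ∈ s
    · rw [ciSup_pos (f := fun _ : y ∈ s => f y) hy]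
      exact le_max_of_le_left (hM (Set.mem_image_of_mem f hy))
    · haveI : IsEmpty (y ∈ s) := ⟨hy⟩
      rw [Real.iSup_of_isEmpty]
      exact le_max_right _ _
  calc f x = ⨆ _ : x ∈ s, f x := (ciSup_pos (f := fun _ : x ∈ s => f x) hx).symm
    _ ≤ ⨆ y, ⨆ _ : y ∈ s, f y := le_ciSup hF x

lemma pi_map_eval {ι : Type*} [Fintype ι] {S : Type*} [MeasurableSpace S]
    (P : Measure S) [IsProbabilityMeasure P] (i : ι) :
    (Measure.pi fun _ : ι => P).map (fun D => D i) = P := by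
  classical
  ext A hA
  rw [Measure.map_apply (measurable_pi_apply i) hA]
  have hpre : (fun D : ι → S => D i) ⁻¹' A =
      Set.pi Set.univ (Function.update (fun _ : ι => (Set.univ : Set S)) i A) := by
    ext D
    simp only [Set.mem_preimage, Set.mem_pi, Set.mem_univ, forall_true_left, Function.eval]
    constructor
    · intro h j
      rcases eq_or_ne j i with rfl | hj
      · simpa using h
      · simp [Function.update_of_ne hj]
    · intro h
      have := h i
      simpa using this
  rw [hpre, Measure.pi_pi]
  rw [Finset.prod_eq_single i (fun j _ hj => by simp [Function.update_of_ne hj]) (by simp)]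
  simp

/-- For `D ∼ Pⁿ` i.i.d., with probability at least `4/5`, the clipping bias
`b_D = max_{x∈𝒳} ‖(1/n)∑ᵢ (g(x,sᵢ) − Π_C(g(x,sᵢ)))‖` satisfies
`b_D ≤ 5 G_k^k / ((k−1) C^{k−1})`. -/
theorem clipping_bias_high_probability
    {d : ℕ} {S : Type*} [MeasurableSpace S]
    (P : Measure S) [IsProbabilityMeasure P]
    (X : Set (EuclideanSpace ℝ (Fin d)))
    (hXne : X.Nonempty) (hXcomp : IsCompact X)
    (g : EuclideanSpace ℝ (Fin d) → S → EuclideanSpace ℝ (Fin d))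
    (hgmeas : Measurable (fun p : EuclideanSpace ℝ (Fin d) × S => g p.1 p.2))
    (hgcont : ∀ s, ContinuousOn (fun x => g x s) X)
    (k : ℕ) (hk : 2 ≤ k) (n : ℕ) (hn : 1 ≤ n)
    (C : ℝ) (hC : 0 < C) (G : ℝ) (hG : 0 ≤ G)
    (hmoment : ∫⁻ s, ENNReal.ofReal (⨆ x ∈ X, ‖g x s‖ ^ k) ∂P ≤ ENNReal.ofReal (G ^ k)) :
    (Measure.pi fun _ : Fin n => P)
        {D : Fin n → S |
          (⨆ x ∈ X, ‖(n : ℝ)⁻¹ • ∑ i, (g x (D i) - euclidClip C (g x (D i)))‖)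
            ≤ 5 * G ^ k / (((k : ℝ) - 1) * C ^ (k - 1))}
      ≥ 4 / 5 := by
  classical
  set μ := Measure.pi fun _ : Fin n => P with hμdef
  haveI : IsProbabilityMeasure μ := by rw [hμdef]; infer_instance
  have hn' : (0:ℝ) < (n:ℝ) := by exact_mod_cast hn
  have hk1 : (1:ℝ) ≤ (k:ℝ) - 1 := by
    have : (2:ℝ) ≤ (k:ℝ) := by exact_mod_cast hk
    linarith
  have hKpos : 0 < ((k:ℝ) - 1) * C ^ (k - 1) := by
    have := pow_pos hC (k - 1); nlinarith
  set B := 5 * G ^ k / (((k:ℝ) - 1) * C ^ (k - 1)) with hB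
  have hB0 : 0 ≤ B := div_nonneg (by positivity) hKpos.le
  -- scalar bound : max (y - C) 0 ≤ y^k / ((k-1) C^(k-1))
  have hscalar : ∀ y : ℝ, 0 ≤ y →
      max (y - C) 0 ≤ y ^ k / (((k:ℝ) - 1) * C ^ (k - 1)) := by
    intro y hy
    rw [max_le_iff]
    refine ⟨?_, by positivity⟩
    rw [le_div_iff₀ hKpos]
    rcases le_or_gt y C with h | h
    · have h1 : y - C ≤ 0 := by linarith
      nlinarith [pow_nonneg hy k]
    · have haux := aux_pow C y hC h.le (k - 1)
      have hkk : k - 1 + 1 = k := Nat.succ_pred_eq_of_pos (show 0 < k by omega)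
      rw [hkk] at haux
      have hcast : ((k - 1 : ℕ) : ℝ) = (k:ℝ) - 1 := by
        have h1 : (1:ℕ) ≤ k := by omega
        push_cast [Nat.cast_sub h1]
        ring
      rw [hcast] at haux
      nlinarith [haux]
  -- the envelope function
  set φ : S → ℝ≥0∞ := fun s => ⨆ x ∈ X, ENNReal.ofReal (‖g x s‖ ^ k) with hφdef
  have hgx : ∀ x, Measurable fun s => g x s := fun x =>
    hgmeas.comp (measurable_const.prodMk measurable_id)
  have hφle : ∀ x ∈ X, ∀ s, ENNReal.ofReal (‖g x s‖ ^ k) ≤ φ s := fun x hx s =>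
    le_iSup₂ (f := fun x (_ : x ∈ X) => ENNReal.ofReal (‖g x s‖ ^ k)) x hx
  -- measurability of φ via a countable dense subset of X
  obtain ⟨t, htc, htd⟩ := TopologicalSpace.exists_countable_dense ↥X
  haveI : Countable ↥t := htc.to_subtype
  have hcontψ : ∀ s, ContinuousOn (fun x => ENNReal.ofReal (‖g x s‖ ^ k)) X := fun s =>
    ENNReal.continuous_ofReal.comp_continuousOn (((hgcont s).norm).pow k)
  have hφeq : φ = fun s => ⨆ y : t,
      ENNReal.ofReal (‖g ((y : ↥X) : EuclideanSpace ℝ (Fin d)) s‖ ^ k) := by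
    funext s
    apply le_antisymm
    · refine iSup₂_le fun x hx => ?_
      have hmem : x ∈ closure (Subtype.val '' t : Set (EuclideanSpace ℝ (Fin d))) := by
        have h1 : (⟨x, hx⟩ : ↥X) ∈ closure t := htd _
        have := map_mem_closure continuous_subtype_val h1 (Set.mapsTo_image _ _)
        simpa using this
      have hsub : (Subtype.val '' t : Set (EuclideanSpace ℝ (Fin d))) ⊆ X := by
        rintro _ ⟨y, _, rfl⟩; exact y.2
      haveI hne : (nhdsWithin x (Subtype.val '' t)).NeBot :=
        mem_closure_iff_nhdsWithin_neBot.mp hmem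
      have htend : Filter.Tendsto (fun z => ENNReal.ofReal (‖g z s‖ ^ k))
          (nhdsWithin x (Subtype.val '' t)) (nhds (ENNReal.ofReal (‖g x s‖ ^ k))) :=
        ((hcontψ s) x hx).mono_left (nhdsWithin_mono x hsub)
      refine le_of_tendsto htend ?_
      filter_upwards [self_mem_nhdsWithin] with z hz
      obtain ⟨y, hy, rfl⟩ := hz
      exact le_iSup (fun y : t =>
        ENNReal.ofReal (‖g ((y : ↥X) : EuclideanSpace ℝ (Fin d)) s‖ ^ k)) ⟨y, hy⟩
    · refine iSup_le fun y => ?_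
      exact le_iSup₂ (f := fun x (_ : x ∈ X) => ENNReal.ofReal (‖g x s‖ ^ k))
        ((y : ↥X) : EuclideanSpace ℝ (Fin d)) (y : ↥X).2
  have hφmeas : Measurable φ := by
    rw [hφeq]
    exact Measurable.iSup fun y => (((hgx _).norm).pow_const k).ennreal_ofReal
  -- integral bound for φ
  have hφint : ∫⁻ s, φ s ∂P ≤ ENNReal.ofReal (G ^ k) := by
    refine le_trans (lintegral_mono fun s => ?_) hmoment
    refine iSup₂_le fun x hx => ENNReal.ofReal_le_ofReal ?_
    have hb : BddAbove ((fun x => ‖g x s‖ ^ k) '' X) :=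
      (hXcomp.image_of_continuousOn (((hgcont s).norm).pow k)).bddAbove
    exact le_biSup_real _ hb (fun x _ => by positivity) hx
  -- the sum functional
  set F : (Fin n → S) → ℝ≥0∞ := fun D => ∑ i, φ (D i) with hFdef
  have hFmeas : Measurable F :=
    Finset.measurable_sum _ fun i _ => hφmeas.comp (measurable_pi_apply i)
  set c : ℝ≥0∞ := ENNReal.ofReal (5 * n * G ^ k) with hc
  set A' := {D : Fin n → S | F D ≤ c} with hA'
  have hA'meas : MeasurableSet A' := measurableSet_le hFmeas measurable_const
  have hFint : ∫⁻ D, F D ∂μ ≤ (n : ℝ≥0∞) * ENNReal.ofReal (G ^ k) := by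
    rw [hFdef]
    rw [lintegral_finset_sum (f := fun (i : Fin n) (D : Fin n → S) => φ (D i)) Finset.univ (fun i _ => hφmeas.comp (measurable_pi_apply i))]
    have heach : ∀ i : Fin n, ∫⁻ D, φ (D i) ∂μ = ∫⁻ s, φ s ∂P := by
      intro i
      have h := lintegral_map (μ := Measure.pi fun _ : Fin n => P) hφmeas (measurable_pi_apply i)
      rw [pi_map_eval P i] at h
      rw [hμdef, ← h]
    calc ∑ i : Fin n, ∫⁻ D, φ (D i) ∂μ = ∑ _i : Fin n, ∫⁻ s, φ s ∂P := by
          exact Finset.sum_congr rfl fun i _ => heach i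
      _ = (n : ℝ≥0∞) * ∫⁻ s, φ s ∂P := by
          rw [Finset.sum_const, Finset.card_univ, Fintype.card_fin, nsmul_eq_mul]
      _ ≤ (n : ℝ≥0∞) * ENNReal.ofReal (G ^ k) := mul_le_mul_right hφint _
  -- Markov bound on the complement
  have hcompl : μ A'ᶜ ≤ 1 / 5 := by
    rcases eq_or_lt_of_le hG with hG0 | hG0
    · have hint0 : ∫⁻ D, F D ∂μ = 0 := by
        refine le_antisymm (hFint.trans ?_) zero_le
        rw [← hG0]
        simp [zero_pow (by omega : k ≠ 0)]
      have hF0 : ∀ᵐ D ∂μ, F D = 0 := (lintegral_eq_zero_iff hFmeas).mp hint0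
      have hnull : μ {D | ¬ F D = 0} = 0 := by
        rw [← ae_iff]; exact hF0
      have hsub : A'ᶜ ⊆ {D | ¬ F D = 0} := by
        intro D hD
        simp only [hA', Set.mem_compl_iff, Set.mem_setOf_eq] at hD
        intro h0
        exact hD (by rw [h0]; exact zero_le)
      exact le_trans (le_of_eq (measure_mono_null hsub hnull)) zero_le
    · have hGk : (0:ℝ) < G ^ k := pow_pos hG0 k
      have hcne : c ≠ 0 := by
        rw [hc]
        simp only [ne_eq, ENNReal.ofReal_eq_zero, not_le]
        positivity
      have hcnetop : c ≠ ⊤ := ENNReal.ofReal_ne_top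
      have hmark := meas_ge_le_lintegral_div hFmeas.aemeasurable hcne hcnetop (μ := μ)
      have hsub : A'ᶜ ⊆ {D | c ≤ F D} := by
        intro D hD
        simp only [hA', Set.mem_compl_iff, Set.mem_setOf_eq] at hD ⊢
        exact (lt_of_not_ge hD).le
      refine le_trans (measure_mono hsub) (le_trans hmark ?_)
      refine le_trans (ENNReal.div_le_div_right hFint c) ?_
      have h5 : c = ((n : ℝ≥0∞) * ENNReal.ofReal (G ^ k)) * 5 := by
        rw [hc, show (5:ℝ) * n * G ^ k = ((n:ℝ) * G ^ k) * 5 by ring,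
          ENNReal.ofReal_mul (by positivity), ENNReal.ofReal_mul (by positivity)]
        rw [ENNReal.ofReal_natCast]
        norm_num
      rw [h5]
      set a := (n : ℝ≥0∞) * ENNReal.ofReal (G ^ k) with ha
      have ha0 : a ≠ 0 := by
        rw [ha]
        refine mul_ne_zero ?_ ?_
        · simp only [ne_eq, Nat.cast_eq_zero]; omega
        · simp only [ne_eq, ENNReal.ofReal_eq_zero, not_le]; exact hGk
      have hat : a ≠ ⊤ := by
        rw [ha]
        exact ENNReal.mul_ne_top (ENNReal.natCast_ne_top n) ENNReal.ofReal_ne_top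
      calc a / (a * 5) = (a * 1) / (a * 5) := by rw [mul_one]
        _ = 1 / 5 := ENNReal.mul_div_mul_left 1 5 ha0 hat
        _ ≤ 1 / 5 := le_rfl
  -- A' is contained in the target event
  have hsubset : A' ⊆ {D : Fin n → S |
      (⨆ x ∈ X, ‖(n : ℝ)⁻¹ • ∑ i, (g x (D i) - euclidClip C (g x (D i)))‖) ≤ B} := by
    intro D hD
    simp only [hA', Set.mem_setOf_eq] at hD ⊢
    refine Real.iSup_le (fun x => Real.iSup_le (fun hx => ?_) hB0) hB0
    have hsum : ∑ i, ‖g x (D i)‖ ^ k ≤ 5 * n * G ^ k := by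
      have h1 : ENNReal.ofReal (∑ i, ‖g x (D i)‖ ^ k) ≤ c := by
        rw [ENNReal.ofReal_sum_of_nonneg (fun i _ => by positivity)]
        exact le_trans (Finset.sum_le_sum fun i _ => hφle x hx (D i)) hD
      exact (ENNReal.ofReal_le_ofReal_iff (by positivity)).mp h1
    have hterm : ∀ i : Fin n, ‖g x (D i) - euclidClip C (g x (D i))‖ ≤
        ‖g x (D i)‖ ^ k / (((k:ℝ) - 1) * C ^ (k - 1)) := fun i => by
      rw [clip_norm_eq C hC]
      exact hscalar _ (norm_nonneg _)
    calc ‖(n:ℝ)⁻¹ • ∑ i, (g x (D i) - euclidClip C (g x (D i)))‖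
        = (n:ℝ)⁻¹ * ‖∑ i, (g x (D i) - euclidClip C (g x (D i)))‖ := by
          rw [norm_smul, Real.norm_eq_abs, abs_of_nonneg (by positivity)]
      _ ≤ (n:ℝ)⁻¹ * ∑ i, ‖g x (D i) - euclidClip C (g x (D i))‖ :=
          mul_le_mul_of_nonneg_left (norm_sum_le _ _) (by positivity)
      _ ≤ (n:ℝ)⁻¹ * ∑ i, ‖g x (D i)‖ ^ k / (((k:ℝ) - 1) * C ^ (k - 1)) :=
          mul_le_mul_of_nonneg_left (Finset.sum_le_sum fun i _ => hterm i) (by positivity)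
      _ ≤ (n:ℝ)⁻¹ * (5 * n * G ^ k / (((k:ℝ) - 1) * C ^ (k - 1))) := by
          rw [← Finset.sum_div]
          exact mul_le_mul_of_nonneg_left
            (div_le_div_of_nonneg_right hsum hKpos.le) (by positivity)
      _ = B := by
          rw [hB]
          field_simp
  -- conclude
  have hA'big : (4:ℝ≥0∞) / 5 ≤ μ A' := by
    have h1 : μ A' + μ A'ᶜ = 1 := by
      rw [measure_add_measure_compl hA'meas, measure_univ]
    have h2 : (1:ℝ≥0∞) ≤ μ A' + 1 / 5 :=
      calc (1:ℝ≥0∞) = μ A' + μ A'ᶜ := h1.symm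
        _ ≤ μ A' + 1 / 5 := add_le_add_right hcompl _
    have h3 : (4:ℝ≥0∞) / 5 + 1 / 5 = 1 :=
      calc (4:ℝ≥0∞) / 5 + 1 / 5 = (4 + 1) / 5 := by rw [ENNReal.div_add_div_same]
        _ = 5 / 5 := by norm_num
        _ = 1 := ENNReal.div_self (by norm_num) (by norm_num)
    have h4 : (4:ℝ≥0∞) / 5 + 1 / 5 ≤ μ A' + 1 / 5 := by rw [h3]; exact h2
    exact (ENNReal.add_le_add_iff_right (by norm_num : (1:ℝ≥0∞)/5 ≠ ⊤)).mp h4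
  exact le_trans hA'big (measure_mono hsubset)
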